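/- In a coordination game on ℝ with Euclidean preferences, a location set L = {l_1 < l_2 < ⋯ < l_k} with k ≥ 2 is a LEX equilibrium set if and only if for every player i there exist ideal points x_1 < x_2 < ⋯ < x_k in player i's set of possible ideal points such that x_t < (l_t + l_{t+1})/2 < x_{t+1} for all t = 1,…,k−1. -/

import Mathlib

open Finset

/-- For `a < b`, location `a` is strictly closer to `x` than `b` iff `x` lies
strictly left of the midpoint. -/
lemma key1 (a b x : ℝ) (h : a < b) : |a - x| < |b - x| ↔ x < (a + b) / 2 := by
  constructor
  · intro h'
    by_contra hx
    push_neg at hx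
    have h1 : |a - x| = x - a := by
      rw [abs_of_nonpos (by linarith)]; ring
    rcases abs_cases (b - x) with ⟨h2, _⟩ | ⟨h2, _⟩ <;> linarith
  · intro hx
    have hb : |b - x| = b - x := abs_of_pos (by linarith)
    rw [hb, abs_lt]
    constructor <;> linarith

/-- For `a < b`, location `b` is strictly closer to `x` than `a` iff `x` lies
strictly right of the midpoint. -/
lemma key2 (a b x : ℝ) (h : a < b) : |b - x| < |a - x| ↔ (a + b) / 2 < x := by
  constructor
  · intro h'
    by_contra hx
    push_neg at hx
    have h1 : |b - x| = b - x := by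
      rw [abs_of_nonneg (by linarith)]
    rcases abs_cases (a - x) with ⟨h2, _⟩ | ⟨h2, _⟩ <;> linarith
  · intro hx
    have hb : |a - x| = x - a := by
      rw [abs_of_nonpos (by linarith)]; ring
    rw [hb, abs_lt]
    constructor <;> linarith

/-- A function on `Fin k` increasing at each consecutive step is strictly
monotone. -/
lemma fin_strictMono {k : ℕ} {f : Fin k → ℝ}
    (h : ∀ t (ht : t + 1 < k), f ⟨t, Nat.lt_of_succ_lt ht⟩ < f ⟨t + 1, ht⟩) :
    StrictMono f := by
  intro a b hab
  obtain ⟨a, ha⟩ := a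
  obtain ⟨b, hb⟩ := b
  rw [Fin.mk_lt_mk] at hab
  induction b with
  | zero => omega
  | succ n ih =>
    rcases Nat.lt_or_ge a n with h' | h'
    · exact (ih (by omega) h').trans (h n hb)
    · have : a = n := by omega
      subst this
      exact h a hb

/-- `l` is the most preferred location in `L` for a Euclidean type with ideal
point `x`: it is strictly closer to `x` than every other location of `L`. -/
def EucBest (x : ℝ) (L : Finset ℝ) (l : ℝ) : Prop :=
  l ∈ L ∧ ∀ l' ∈ L, l' ≠ l → |l - x| < |l' - x|

/-- In a coordination game on ℝ with Euclidean preferences (player `i`'s types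
are the Euclidean preferences derived from the set `X i` of possible ideal
points), a location set `L = {l 0 < l 1 < ⋯ < l (k-1)}` with `k ≥ 2` is a LEX
equilibrium set (every player's best-location map is onto `L`) if and only if
for every player `i` there exist ideal points `x 0 < x 1 < ⋯ < x (k-1)` in
`X i` such that `x t < (l t + l (t+1))/2 < x (t+1)` for all `t`. -/
theorem stmt17 {ι : Type*} (X : ι → Finset ℝ) (k : ℕ) (hk : 2 ≤ k)
    (l : Fin k → ℝ) (hl : StrictMono l) :
    (∀ i, ∀ j : Fin k, ∃ x ∈ X i, EucBest x (Finset.univ.image l) (l j)) ↔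
    (∀ i, ∃ x : Fin k → ℝ, StrictMono x ∧ (∀ t, x t ∈ X i) ∧
      ∀ t : ℕ, (ht : t + 1 < k) →
        x ⟨t, by omega⟩ < (l ⟨t, by omega⟩ + l ⟨t + 1, ht⟩) / 2 ∧
        (l ⟨t, by omega⟩ + l ⟨t + 1, ht⟩) / 2 < x ⟨t + 1, ht⟩) := by
  constructor
  · intro h i
    choose f hfX hbest using h i
    have step : ∀ t : ℕ, (ht : t + 1 < k) →
        f ⟨t, by omega⟩ < (l ⟨t, by omega⟩ + l ⟨t + 1, ht⟩) / 2 ∧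
        (l ⟨t, by omega⟩ + l ⟨t + 1, ht⟩) / 2 < f ⟨t + 1, ht⟩ := by
      intro t ht
      have hlt : l ⟨t, by omega⟩ < l ⟨t + 1, ht⟩ := hl (by simp [Fin.lt_def])
      constructor
      · have h1 := (hbest ⟨t, by omega⟩).2 (l ⟨t + 1, ht⟩)
          (mem_image_of_mem l (mem_univ _)) (ne_of_gt hlt)
        exact (key1 _ _ _ hlt).mp h1
      · have h2 := (hbest ⟨t + 1, ht⟩).2 (l ⟨t, by omega⟩)
          (mem_image_of_mem l (mem_univ _)) (ne_of_lt hlt)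
        exact (key2 _ _ _ hlt).mp h2
    refine ⟨f, fin_strictMono ?_, hfX, step⟩
    intro t ht
    have h1 := (step t ht).1
    have h2 := (step t ht).2
    linarith
  · intro h i j
    obtain ⟨x, hmono, hxX, hmid⟩ := h i
    refine ⟨x j, hxX j, mem_image_of_mem l (mem_univ _), ?_⟩
    intro l' hl' hne
    obtain ⟨j', -, rfl⟩ := mem_image.mp hl'
    have hjj' : j' ≠ j := fun e => hne (by rw [e])
    rcases lt_or_gt_of_ne hjj' with hlt | hlt
    · -- `j' < j` : use the interval condition at `t = j - 1`
      have hj1 : 1 ≤ (j : ℕ) := by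
        have := hlt
        rw [Fin.lt_def] at this
        omega
      have ht : ((j : ℕ) - 1) + 1 < k := by omega
      have hj : (⟨((j : ℕ) - 1) + 1, ht⟩ : Fin k) = j := Fin.ext (by simp; omega)
      have hm := (hmid ((j : ℕ) - 1) ht).2
      rw [hj] at hm
      have hle : l j' ≤ l ⟨(j : ℕ) - 1, by omega⟩ := by
        apply hl.monotone
        rw [Fin.le_def]
        have := hlt; rw [Fin.lt_def] at this
        simp; omega
      have hlj : l j' < l j := hl hlt
      rw [key2 (l j') (l j) (x j) hlj]
      linarith
    · -- `j < j'` : use the interval condition at `t = j`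
      have ht : (j : ℕ) + 1 < k := by
        have := hlt; rw [Fin.lt_def] at this
        have := j'.isLt
        omega
      have hj : (⟨(j : ℕ), by omega⟩ : Fin k) = j := Fin.ext rfl
      have hm := (hmid (j : ℕ) ht).1
      rw [hj] at hm
      have hle : l ⟨(j : ℕ) + 1, ht⟩ ≤ l j' := by
        apply hl.monotone
        rw [Fin.le_def]
        have := hlt; rw [Fin.lt_def] at this
        simp; omega
      have hlj : l j < l j' := hl hlt
      rw [key1 (l j) (l j') (x j) hlj]
      linarith
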